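/- Let K be a bounded operator on H₁ and L a bounded operator on H₂. Let {xₙ}ₙ≥1 be a K-frame for H₁ with K-dual frame {fₙ}ₙ≥1, and let {yₙ}ₙ≥1 be an L-frame for H₂ with L-dual frame {gₙ}ₙ≥1. Let T₁ and T₂ be the synthesis operators of {xₙ}ₙ≥1 and {yₙ}ₙ≥1, and let θ₁ and θ₂ be the analysis operators of {fₙ}ₙ≥1 and {gₙ}ₙ≥1. Then the following are equivalent: (i) {xₙ ⊕ yₙ}ₙ≥1 is a K ⊕ L-frame for H₁ ⊕ H₂ with {fₙ ⊕ gₙ}ₙ≥1 as a K ⊕ L-dual frame; (ii) T₂θ₁ = 0 and T₁θ₂ = 0. -/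

import Mathlib

noncomputable section

open scoped ENNReal

/-- The sequence of direct sums `xₙ ⊕ yₙ` in the super Hilbert space `H₁ ⊕ H₂`,
realized as `WithLp 2 (H₁ × H₂)`. -/
def pairSeq {H₁ H₂ : Type*} [NormedAddCommGroup H₁] [NormedAddCommGroup H₂]
    (x : ℕ → H₁) (y : ℕ → H₂) : ℕ → WithLp 2 (H₁ × H₂) :=
  fun n => (WithLp.equiv 2 (H₁ × H₂)).symm (x n, y n)

/-- A sequence `{xₙ}` is a Bessel sequence: there is `B > 0` with
`∑ₙ |⟨v, xₙ⟩|² ≤ B‖v‖²` for all `v` (in particular the series converges). -/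
def IsBessel {H : Type*} [NormedAddCommGroup H] [InnerProductSpace ℂ H] (x : ℕ → H) : Prop :=
  ∃ B : ℝ, 0 < B ∧ ∀ v : H, Summable (fun n => ‖(inner ℂ v (x n) : ℂ)‖ ^ 2) ∧
    ∑' n, ‖(inner ℂ v (x n) : ℂ)‖ ^ 2 ≤ B * ‖v‖ ^ 2

/-- A sequence `{xₙ}` is a `K`-frame: there are `A, B > 0` with
`A‖K*v‖² ≤ ∑ₙ |⟨v, xₙ⟩|² ≤ B‖v‖²` for all `v`. -/
def IsKFrame {H : Type*} [NormedAddCommGroup H] [InnerProductSpace ℂ H] [CompleteSpace H]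
    (K : H →L[ℂ] H) (x : ℕ → H) : Prop :=
  ∃ A B : ℝ, 0 < A ∧ 0 < B ∧ ∀ v : H, Summable (fun n => ‖(inner ℂ v (x n) : ℂ)‖ ^ 2) ∧
    A * ‖K.adjoint v‖ ^ 2 ≤ ∑' n, ‖(inner ℂ v (x n) : ℂ)‖ ^ 2 ∧
    ∑' n, ‖(inner ℂ v (x n) : ℂ)‖ ^ 2 ≤ B * ‖v‖ ^ 2

/-- The operator `K ⊕ L` on the super Hilbert space `H₁ ⊕ H₂`,
`(K ⊕ L)(x ⊕ y) = Kx ⊕ Ly`. -/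
def dsum {H₁ H₂ : Type*}
    [NormedAddCommGroup H₁] [InnerProductSpace ℂ H₁]
    [NormedAddCommGroup H₂] [InnerProductSpace ℂ H₂]
    (K : H₁ →L[ℂ] H₁) (L : H₂ →L[ℂ] H₂) :
    WithLp 2 (H₁ × H₂) →L[ℂ] WithLp 2 (H₁ × H₂) :=
  ((WithLp.prodContinuousLinearEquiv 2 ℂ H₁ H₂).symm : (H₁ × H₂) →L[ℂ] WithLp 2 (H₁ × H₂)) ∘L
    (K.prodMap L) ∘L
    ((WithLp.prodContinuousLinearEquiv 2 ℂ H₁ H₂) : WithLp 2 (H₁ × H₂) →L[ℂ] (H₁ × H₂))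

variable {H₁ H₂ : Type*}
  [NormedAddCommGroup H₁] [InnerProductSpace ℂ H₁] [CompleteSpace H₁]
  [TopologicalSpace.SeparableSpace H₁]
  [NormedAddCommGroup H₂] [InnerProductSpace ℂ H₂] [CompleteSpace H₂]
  [TopologicalSpace.SeparableSpace H₂]

/-- A Bessel sequence `{fₙ}` is a `K`-dual frame to `{xₙ}` if `Kv = ∑ₙ ⟨v, fₙ⟩ xₙ` for all `v`
(with the inner ℂ product linear in `v`). -/
def IsKDual {H : Type*} [NormedAddCommGroup H] [InnerProductSpace ℂ H] [CompleteSpace H]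
    (K : H →L[ℂ] H) (f x : ℕ → H) : Prop :=
  IsBessel f ∧ ∀ v : H, HasSum (fun n => (inner ℂ (f n) v : ℂ) • x n) (K v)




/-- Cauchy–Schwarz for tsums. -/
lemma cs_tsum {r s : ℕ → ℝ} (hr0 : ∀ n, 0 ≤ r n) (hs0 : ∀ n, 0 ≤ s n)
    (hr : Summable (fun n => r n ^ 2)) (hs : Summable (fun n => s n ^ 2)) :
    Summable (fun n => r n * s n) ∧
      ∑' n, r n * s n ≤ Real.sqrt (∑' n, r n ^ 2) * Real.sqrt (∑' n, s n ^ 2) := by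
  have hsum : Summable (fun n => r n * s n) := by
    refine Summable.of_nonneg_of_le (fun n => mul_nonneg (hr0 n) (hs0 n))
      (fun n => ?_) ((hr.add hs).div_const 2)
    nlinarith [sq_nonneg (r n - s n)]
  refine ⟨hsum, Summable.tsum_le_of_sum_le hsum fun t => ?_⟩
  refine (Real.sum_mul_le_sqrt_mul_sqrt t r s).trans ?_
  gcongr
  · exact Summable.sum_le_tsum t (fun n _ => sq_nonneg _) hr
  · exact Summable.sum_le_tsum t (fun n _ => sq_nonneg _) hs

lemma lower_aux {H : Type*} [NormedAddCommGroup H] [InnerProductSpace ℂ H] [CompleteSpace H]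
    (K : H →L[ℂ] H) (f x : ℕ → H) (B : ℝ) (hB : 0 ≤ B)
    (hfB : ∀ v : H, Summable (fun n => ‖(inner ℂ v (f n) : ℂ)‖ ^ 2) ∧
      ∑' n, ‖(inner ℂ v (f n) : ℂ)‖ ^ 2 ≤ B * ‖v‖ ^ 2)
    (hdual : ∀ v : H, HasSum (fun n => (inner ℂ (f n) v : ℂ) • x n) (K v))
    (u : H) (hxu : Summable (fun n => ‖(inner ℂ u (x n) : ℂ)‖ ^ 2)) :
    ‖K.adjoint u‖ ^ 2 ≤ B * ∑' n, ‖(inner ℂ u (x n) : ℂ)‖ ^ 2 := by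
  set w := K.adjoint u with hw
  set S := ∑' n, ‖(inner ℂ u (x n) : ℂ)‖ ^ 2 with hS
  have hS0 : 0 ≤ S := tsum_nonneg fun n => sq_nonneg _
  have h1 : HasSum (fun n => (inner ℂ (f n) w : ℂ) * inner ℂ u (x n)) (inner ℂ u (K w)) := by
    have := (hdual w).mapL (innerSL ℂ u)
    simpa [inner_smul_right] using this
  have hfw : Summable (fun n => ‖(inner ℂ (f n) w : ℂ)‖ ^ 2) :=
    (hfB w).1.congr fun n => by rw [norm_inner_symm]
  have hfwB : ∑' n, ‖(inner ℂ (f n) w : ℂ)‖ ^ 2 ≤ B * ‖w‖ ^ 2 := by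
    refine le_trans (le_of_eq (tsum_congr fun n => by rw [norm_inner_symm])) (hfB w).2
  obtain ⟨hcs1, hcs2⟩ := cs_tsum (r := fun n => ‖(inner ℂ (f n) w : ℂ)‖)
    (s := fun n => ‖(inner ℂ u (x n) : ℂ)‖) (fun n => norm_nonneg _) (fun n => norm_nonneg _)
    hfw hxu
  have hww : (inner ℂ w w : ℂ) = inner ℂ u (K w) := by
    rw [hw, ContinuousLinearMap.adjoint_inner_left]
  have hnorm : ‖w‖ ^ 2 = ‖(inner ℂ u (K w) : ℂ)‖ := by
    rw [← hww, inner_self_eq_norm_sq_to_K]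
    simp [sq_abs]
  have h2 : ‖w‖ ^ 2 ≤ Real.sqrt (B * ‖w‖ ^ 2) * Real.sqrt S := by
    calc ‖w‖ ^ 2 = ‖∑' n, (inner ℂ (f n) w : ℂ) * inner ℂ u (x n)‖ := by
          rw [hnorm, h1.tsum_eq]
      _         ≤ ∑' n, ‖(inner ℂ (f n) w : ℂ) * inner ℂ u (x n)‖ := by
          refine norm_tsum_le_tsum_norm ?_
          exact hcs1.congr fun n => by rw [norm_mul]
      _ = ∑' n, ‖(inner ℂ (f n) w : ℂ)‖ * ‖(inner ℂ u (x n) : ℂ)‖ := by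
          exact tsum_congr fun n => norm_mul _ _
      _ ≤ Real.sqrt (∑' n, ‖(inner ℂ (f n) w : ℂ)‖ ^ 2) *
            Real.sqrt (∑' n, ‖(inner ℂ u (x n) : ℂ)‖ ^ 2) := hcs2
      _ ≤ Real.sqrt (B * ‖w‖ ^ 2) * Real.sqrt S := by gcongr
  have hBS : Real.sqrt (B * ‖w‖ ^ 2) = Real.sqrt B * ‖w‖ := by
    rw [Real.sqrt_mul hB, Real.sqrt_sq (norm_nonneg w)]
  rw [hBS] at h2
  rcases eq_or_lt_of_le (norm_nonneg w) with h0 | h0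
  · rw [← h0]; simpa using mul_nonneg hB hS0
  · have h3 : ‖w‖ ≤ Real.sqrt B * Real.sqrt S := by
      have := h2
      rw [sq] at this
      nlinarith [Real.sqrt_nonneg B, Real.sqrt_nonneg S]
    nlinarith [Real.sq_sqrt hB, Real.sq_sqrt hS0, Real.sqrt_nonneg B, Real.sqrt_nonneg S]

lemma pair_inner_right (x : ℕ → H₁) (y : ℕ → H₂) (v : WithLp 2 (H₁ × H₂)) (n : ℕ) :
    (inner ℂ v (pairSeq x y n) : ℂ) = inner ℂ v.fst (x n) + inner ℂ v.snd (y n) := by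
  simp [pairSeq, WithLp.prod_inner_apply, WithLp.equiv_symm_apply, WithLp.toLp_fst, WithLp.toLp_snd]

lemma pair_inner_left (f : ℕ → H₁) (g : ℕ → H₂) (v : WithLp 2 (H₁ × H₂)) (n : ℕ) :
    (inner ℂ (pairSeq f g n) v : ℂ) = inner ℂ (f n) v.fst + inner ℂ (g n) v.snd := by
  simp [pairSeq, WithLp.prod_inner_apply, WithLp.equiv_symm_apply, WithLp.toLp_fst, WithLp.toLp_snd]

lemma pair_bessel {x : ℕ → H₁} {y : ℕ → H₂} {Bx By : ℝ} (hBx : 0 ≤ Bx) (hBy : 0 ≤ By)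
    (hx : ∀ u : H₁, Summable (fun n => ‖(inner ℂ u (x n) : ℂ)‖ ^ 2) ∧
      ∑' n, ‖(inner ℂ u (x n) : ℂ)‖ ^ 2 ≤ Bx * ‖u‖ ^ 2)
    (hy : ∀ u : H₂, Summable (fun n => ‖(inner ℂ u (y n) : ℂ)‖ ^ 2) ∧
      ∑' n, ‖(inner ℂ u (y n) : ℂ)‖ ^ 2 ≤ By * ‖u‖ ^ 2)
    (v : WithLp 2 (H₁ × H₂)) :
    Summable (fun n => ‖(inner ℂ v (pairSeq x y n) : ℂ)‖ ^ 2) ∧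
      ∑' n, ‖(inner ℂ v (pairSeq x y n) : ℂ)‖ ^ 2 ≤ (2 * (Bx + By)) * ‖v‖ ^ 2 := by
  have key : ∀ n, ‖(inner ℂ v (pairSeq x y n) : ℂ)‖ ^ 2 ≤
      2 * (‖(inner ℂ v.fst (x n) : ℂ)‖ ^ 2 + ‖(inner ℂ v.snd (y n) : ℂ)‖ ^ 2) := by
    intro n
    rw [pair_inner_right]
    have h1 : ‖(inner ℂ v.fst (x n) : ℂ) + (inner ℂ v.snd (y n) : ℂ)‖ ≤
        ‖(inner ℂ v.fst (x n) : ℂ)‖ + ‖(inner ℂ v.snd (y n) : ℂ)‖ := norm_add_le _ _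
    have h2 : ‖(inner ℂ v.fst (x n) : ℂ) + (inner ℂ v.snd (y n) : ℂ)‖ ^ 2 ≤
        (‖(inner ℂ v.fst (x n) : ℂ)‖ + ‖(inner ℂ v.snd (y n) : ℂ)‖) ^ 2 :=
      pow_le_pow_left₀ (norm_nonneg _) h1 2
    nlinarith [sq_nonneg (‖(inner ℂ v.fst (x n) : ℂ)‖ - ‖(inner ℂ v.snd (y n) : ℂ)‖)]
  have hsum2 : Summable (fun n =>
      2 * (‖(inner ℂ v.fst (x n) : ℂ)‖ ^ 2 + ‖(inner ℂ v.snd (y n) : ℂ)‖ ^ 2)) :=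
    ((hx v.fst).1.add (hy v.snd).1).mul_left 2
  have hsum : Summable (fun n => ‖(inner ℂ v (pairSeq x y n) : ℂ)‖ ^ 2) :=
    Summable.of_nonneg_of_le (fun n => sq_nonneg _) key hsum2
  refine ⟨hsum, ?_⟩
  have h2 : ∑' n, ‖(inner ℂ v (pairSeq x y n) : ℂ)‖ ^ 2 ≤
      ∑' n, 2 * (‖(inner ℂ v.fst (x n) : ℂ)‖ ^ 2 + ‖(inner ℂ v.snd (y n) : ℂ)‖ ^ 2) :=
    Summable.tsum_le_tsum key hsum hsum2
  have h3 : ∑' n, 2 * (‖(inner ℂ v.fst (x n) : ℂ)‖ ^ 2 + ‖(inner ℂ v.snd (y n) : ℂ)‖ ^ 2) =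
      2 * ((∑' n, ‖(inner ℂ v.fst (x n) : ℂ)‖ ^ 2) + ∑' n, ‖(inner ℂ v.snd (y n) : ℂ)‖ ^ 2) := by
    rw [tsum_mul_left, Summable.tsum_add (hx v.fst).1 (hy v.snd).1]
  have h4 : ‖v‖ ^ 2 = ‖v.fst‖ ^ 2 + ‖v.snd‖ ^ 2 := WithLp.prod_norm_sq_eq_of_L2 v
  have h5 := (hx v.fst).2
  have h6 := (hy v.snd).2
  rw [h3] at h2
  refine h2.trans ?_
  rw [h4]
  nlinarith [sq_nonneg ‖v.fst‖, sq_nonneg ‖v.snd‖]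

lemma dsum_apply' (K : H₁ →L[ℂ] H₁) (L : H₂ →L[ℂ] H₂) (v : WithLp 2 (H₁ × H₂)) :
    dsum K L v = (WithLp.equiv 2 (H₁ × H₂)).symm (K v.fst, L v.snd) := rfl

lemma dsum_fst (K : H₁ →L[ℂ] H₁) (L : H₂ →L[ℂ] H₂) (v : WithLp 2 (H₁ × H₂)) :
    (dsum K L v).fst = K v.fst := rfl

lemma dsum_snd (K : H₁ →L[ℂ] H₁) (L : H₂ →L[ℂ] H₂) (v : WithLp 2 (H₁ × H₂)) :
    (dsum K L v).snd = L v.snd := rfl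

lemma dsum_adjoint (K : H₁ →L[ℂ] H₁) (L : H₂ →L[ℂ] H₂) :
    ContinuousLinearMap.adjoint (dsum K L) =
      dsum (ContinuousLinearMap.adjoint K) (ContinuousLinearMap.adjoint L) := by
  refine ((ContinuousLinearMap.eq_adjoint_iff _ _).mpr fun a b => ?_).symm
  show (inner ℂ (dsum (ContinuousLinearMap.adjoint K) (ContinuousLinearMap.adjoint L) a) b : ℂ) =
    inner ℂ a (dsum K L b)
  rw [WithLp.prod_inner_apply, WithLp.prod_inner_apply]
  change inner ℂ (ContinuousLinearMap.adjoint K a.ofLp.1) b.ofLp.1 +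
      inner ℂ (ContinuousLinearMap.adjoint L a.ofLp.2) b.ofLp.2 =
    inner ℂ a.ofLp.1 (K b.ofLp.1) + inner ℂ a.ofLp.2 (L b.ofLp.2)
  rw [ContinuousLinearMap.adjoint_inner_left, ContinuousLinearMap.adjoint_inner_left]

lemma dsum_adjoint_norm_sq (K : H₁ →L[ℂ] H₁) (L : H₂ →L[ℂ] H₂) (v : WithLp 2 (H₁ × H₂)) :
    ‖ContinuousLinearMap.adjoint (dsum K L) v‖ ^ 2 =
      ‖ContinuousLinearMap.adjoint K v.fst‖ ^ 2 + ‖ContinuousLinearMap.adjoint L v.snd‖ ^ 2 := by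
  rw [dsum_adjoint, WithLp.prod_norm_sq_eq_of_L2, dsum_fst, dsum_snd]

lemma hasSum_pair_fst {c : ℕ → ℂ} {x : ℕ → H₁} {y : ℕ → H₂} {v : WithLp 2 (H₁ × H₂)}
    (h : HasSum (fun n => c n • pairSeq x y n) v) : HasSum (fun n => c n • x n) v.fst := by
  have := h.mapL ((ContinuousLinearMap.fst ℂ H₁ H₂).comp
    (WithLp.prodContinuousLinearEquiv 2 ℂ H₁ H₂ : WithLp 2 (H₁ × H₂) →L[ℂ] H₁ × H₂))
  simpa [pairSeq] using this

lemma hasSum_pair_snd {c : ℕ → ℂ} {x : ℕ → H₁} {y : ℕ → H₂} {v : WithLp 2 (H₁ × H₂)}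
    (h : HasSum (fun n => c n • pairSeq x y n) v) : HasSum (fun n => c n • y n) v.snd := by
  have := h.mapL ((ContinuousLinearMap.snd ℂ H₁ H₂).comp
    (WithLp.prodContinuousLinearEquiv 2 ℂ H₁ H₂ : WithLp 2 (H₁ × H₂) →L[ℂ] H₁ × H₂))
  simpa [pairSeq] using this

lemma hasSum_pair {c : ℕ → ℂ} {x : ℕ → H₁} {y : ℕ → H₂} {a : H₁} {b : H₂}
    (h1 : HasSum (fun n => c n • x n) a) (h2 : HasSum (fun n => c n • y n) b) :
    HasSum (fun n => c n • pairSeq x y n) ((WithLp.equiv 2 (H₁ × H₂)).symm (a, b)) := by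
  have := (h1.prodMk h2).mapL
    ((WithLp.prodContinuousLinearEquiv 2 ℂ H₁ H₂).symm : (H₁ × H₂) →L[ℂ] WithLp 2 (H₁ × H₂))
  simpa [pairSeq, ← WithLp.toLp_smul, Prod.smul_mk] using this

/-- let `{xₙ}` be a `K`-frame for `H₁` with `K`-dual `{fₙ}` and `{yₙ}` an
`L`-frame for `H₂` with `L`-dual `{gₙ}`; let `T₁, T₂` be the synthesis operators of
`{xₙ}, {yₙ}` and `θ₁, θ₂` the analysis operators of `{fₙ}, {gₙ}`. Then `{xₙ ⊕ yₙ}` is a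
`K ⊕ L`-frame with `{fₙ ⊕ gₙ}` as a `K ⊕ L`-dual frame iff `T₂θ₁ = 0` and `T₁θ₂ = 0`. -/
theorem pair_dual_iff (K : H₁ →L[ℂ] H₁) (L : H₂ →L[ℂ] H₂)
    (x f : ℕ → H₁) (y g : ℕ → H₂)
    (hx : IsKFrame K x) (hf : IsKDual K f x)
    (hy : IsKFrame L y) (hg : IsKDual L g y)
    (T₁ : lp (fun _ : ℕ => ℂ) 2 →L[ℂ] H₁)
    (hT₁ : ∀ a : lp (fun _ : ℕ => ℂ) 2, HasSum (fun n => a n • x n) (T₁ a))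
    (T₂ : lp (fun _ : ℕ => ℂ) 2 →L[ℂ] H₂)
    (hT₂ : ∀ a : lp (fun _ : ℕ => ℂ) 2, HasSum (fun n => a n • y n) (T₂ a))
    (θ₁ : H₁ →L[ℂ] lp (fun _ : ℕ => ℂ) 2)
    (hθ₁ : ∀ (u : H₁) (n : ℕ), θ₁ u n = (inner ℂ (f n) u : ℂ))
    (θ₂ : H₂ →L[ℂ] lp (fun _ : ℕ => ℂ) 2)
    (hθ₂ : ∀ (v : H₂) (n : ℕ), θ₂ v n = (inner ℂ (g n) v : ℂ)) :
    (IsKFrame (dsum K L) (pairSeq x y) ∧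
        IsKDual (dsum K L) (pairSeq f g) (pairSeq x y)) ↔
      (T₂ ∘L θ₁ = 0 ∧ T₁ ∘L θ₂ = 0) := by
  constructor
  · rintro ⟨-, -, hdualp⟩
    constructor
    · -- T₂ ∘L θ₁ = 0
      ext u
      have hv := hdualp ((WithLp.equiv 2 (H₁ × H₂)).symm (u, (0 : H₂)))
      have h2 := hasSum_pair_snd hv
      have h3 : HasSum (fun n => (inner ℂ (f n) u : ℂ) • y n) 0 := by
        have e : ∀ n, (inner ℂ (pairSeq f g n)
            ((WithLp.equiv 2 (H₁ × H₂)).symm (u, (0 : H₂))) : ℂ) = inner ℂ (f n) u := by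
          intro n
          rw [pair_inner_left]
          simp [WithLp.equiv_symm_apply, WithLp.toLp_fst, WithLp.toLp_snd]
        have e2 : (dsum K L ((WithLp.equiv 2 (H₁ × H₂)).symm (u, (0 : H₂)))).snd = 0 := by
          rw [dsum_snd]
          simp [WithLp.equiv_symm_apply, WithLp.toLp_snd]
        rw [e2] at h2
        exact h2.congr_fun fun n => by rw [e n]
      have h4 : HasSum (fun n => (inner ℂ (f n) u : ℂ) • y n) (T₂ (θ₁ u)) := by
        have := hT₂ (θ₁ u)
        exact this.congr_fun fun n => by rw [hθ₁]
      simpa using h4.unique h3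
    · -- T₁ ∘L θ₂ = 0
      ext w
      have hv := hdualp ((WithLp.equiv 2 (H₁ × H₂)).symm ((0 : H₁), w))
      have h2 := hasSum_pair_fst hv
      have h3 : HasSum (fun n => (inner ℂ (g n) w : ℂ) • x n) 0 := by
        have e : ∀ n, (inner ℂ (pairSeq f g n)
            ((WithLp.equiv 2 (H₁ × H₂)).symm ((0 : H₁), w)) : ℂ) = inner ℂ (g n) w := by
          intro n
          rw [pair_inner_left]
          simp [WithLp.equiv_symm_apply, WithLp.toLp_fst, WithLp.toLp_snd]
        have e2 : (dsum K L ((WithLp.equiv 2 (H₁ × H₂)).symm ((0 : H₁), w))).fst = 0 := by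
          rw [dsum_fst]
          simp [WithLp.equiv_symm_apply, WithLp.toLp_fst]
        rw [e2] at h2
        exact h2.congr_fun fun n => by rw [e n]
      have h4 : HasSum (fun n => (inner ℂ (g n) w : ℂ) • x n) (T₁ (θ₂ w)) := by
        have := hT₁ (θ₂ w)
        exact this.congr_fun fun n => by rw [hθ₂]
      simpa using h4.unique h3
  · rintro ⟨h21, h12⟩
    obtain ⟨Ax, Bx, hAx, hBx, hxp⟩ := hx
    obtain ⟨Ay, By, hAy, hBy, hyp⟩ := hy
    obtain ⟨⟨Bf, hBf, hfp⟩, hfd⟩ := hf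
    obtain ⟨⟨Bg, hBg, hgp⟩, hgd⟩ := hg
    -- the pair dual property
    have hdual : ∀ v : WithLp 2 (H₁ × H₂),
        HasSum (fun n => (inner ℂ (pairSeq f g n) v : ℂ) • pairSeq x y n) (dsum K L v) := by
      intro v
      have hzx : HasSum (fun n => (inner ℂ (g n) v.snd : ℂ) • x n) 0 := by
        have hz : T₁ (θ₂ v.snd) = 0 := by
          have := ContinuousLinearMap.ext_iff.mp h12 v.snd
          simpa using this
        have := hT₁ (θ₂ v.snd)
        rw [hz] at this
        exact this.congr_fun fun n => by rw [hθ₂]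
      have hzy : HasSum (fun n => (inner ℂ (f n) v.fst : ℂ) • y n) 0 := by
        have hz : T₂ (θ₁ v.fst) = 0 := by
          have := ContinuousLinearMap.ext_iff.mp h21 v.fst
          simpa using this
        have := hT₂ (θ₁ v.fst)
        rw [hz] at this
        exact this.congr_fun fun n => by rw [hθ₁]
      have h1 : HasSum (fun n => (inner ℂ (pairSeq f g n) v : ℂ) • x n) (K v.fst) := by
        have := (hfd v.fst).add hzx
        rw [add_zero] at this
        exact this.congr_fun fun n => by rw [pair_inner_left, add_smul]
      have h2 : HasSum (fun n => (inner ℂ (pairSeq f g n) v : ℂ) • y n) (L v.snd) := by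
        have := (hzy.add (hgd v.snd))
        rw [zero_add] at this
        exact this.congr_fun fun n => by rw [pair_inner_left, add_smul]
      rw [dsum_apply']
      exact hasSum_pair h1 h2
    have hfgb := pair_bessel hBf.le hBg.le hfp hgp
    have hxyb := pair_bessel hBx.le hBy.le (fun u => ⟨(hxp u).1, (hxp u).2.2⟩)
      (fun u => ⟨(hyp u).1, (hyp u).2.2⟩)
    have hC : (0 : ℝ) < 2 * (Bf + Bg) := by positivity
    refine ⟨⟨1 / (2 * (Bf + Bg)), 2 * (Bx + By), by positivity, by positivity, fun v => ?_⟩,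
      ⟨2 * (Bf + Bg), hC, hfgb⟩, hdual⟩
    refine ⟨(hxyb v).1, ?_, (hxyb v).2⟩
    have hl := lower_aux (dsum K L) (pairSeq f g) (pairSeq x y) (2 * (Bf + Bg)) hC.le
      hfgb hdual v (hxyb v).1
    have h1C : (0 : ℝ) ≤ 1 / (2 * (Bf + Bg)) := by positivity
    have := mul_le_mul_of_nonneg_left hl h1C
    calc 1 / (2 * (Bf + Bg)) * ‖ContinuousLinearMap.adjoint (dsum K L) v‖ ^ 2
        ≤ 1 / (2 * (Bf + Bg)) * ((2 * (Bf + Bg)) *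
            ∑' n, ‖(inner ℂ v (pairSeq x y n) : ℂ)‖ ^ 2) := this
      _ = ∑' n, ‖(inner ℂ v (pairSeq x y n) : ℂ)‖ ^ 2 := by
          rw [one_div, inv_mul_cancel_left₀ hC.ne']
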